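/- For λ > 0, ω > 0 and c_N > 0, the effective potential U_eff(r) = c_N/(2(1+λr²)r²) + ω²r²/(2(1+λr²)) on (0,∞) attains its unique minimum at r_min with r_min² = (λc_N + √(λ²c_N² + ω²c_N))/ω², and the minimum value is U_eff(r_min) = −λc_N + √(λ²c_N² + ω²c_N). -/

import Mathlib

open Filter Topology

theorem stmt_16 (lam om c : ℝ) (hlam : 0 < lam) (hom : 0 < om) (hc : 0 < c)
    (Ueff : ℝ → ℝ)
    (hUeff : ∀ r, Ueff r = c / (2 * (1 + lam * r ^ 2) * r ^ 2)
        + om ^ 2 * r ^ 2 / (2 * (1 + lam * r ^ 2)))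
    (rmin : ℝ)
    (hrmin : rmin = Real.sqrt ((lam * c + Real.sqrt (lam ^ 2 * c ^ 2 + om ^ 2 * c)) / om ^ 2)) :
    0 < rmin ∧
    Ueff rmin = -lam * c + Real.sqrt (lam ^ 2 * c ^ 2 + om ^ 2 * c) ∧
    (∀ r : ℝ, 0 < r → Ueff rmin ≤ Ueff r) ∧
    (∀ r : ℝ, 0 < r → Ueff r = Ueff rmin → r = rmin) := by
  set S := Real.sqrt (lam ^ 2 * c ^ 2 + om ^ 2 * c) with hSdef
  have hS2 : S ^ 2 = lam ^ 2 * c ^ 2 + om ^ 2 * c := Real.sq_sqrt (by positivity)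
  have hSpos : 0 < S := Real.sqrt_pos.2 (by positivity)
  have hSgt : lam * c < S := by
    nlinarith [hS2, mul_pos (pow_pos hom 2) hc, mul_pos hlam hc, hSpos]
  have hA : 0 < om ^ 2 + 2 * lam ^ 2 * c - 2 * lam * S := by
    nlinarith [hS2, pow_pos hom 2, mul_pos hlam hc, hSpos, sq_nonneg (om ^ 2 + 2 * lam ^ 2 * c + 2 * lam * S)]
  have hspos : 0 < (lam * c + S) / om ^ 2 := by positivity
  have hrpos : 0 < rmin := by rw [hrmin]; exact Real.sqrt_pos.2 hspos
  have hs : rmin ^ 2 = (lam * c + S) / om ^ 2 := by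
    rw [hrmin]; exact Real.sq_sqrt hspos.le
  have hom2 : (om:ℝ) ^ 2 ≠ 0 := by positivity
  have hcomb : ∀ r : ℝ, 0 < r →
      Ueff r = (c + om ^ 2 * r ^ 4) / (2 * (1 + lam * r ^ 2) * r ^ 2) := by
    intro r hr
    have hD : (0:ℝ) < 1 + lam * r ^ 2 := by positivity
    rw [hUeff]
    field_simp
  have hkey : ∀ r : ℝ,
      (om ^ 2 + 2 * lam ^ 2 * c - 2 * lam * S) * (om ^ 2 * r ^ 2 - lam * c - S) ^ 2
        = om ^ 4 * (c + om ^ 2 * r ^ 4)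
          - 2 * om ^ 4 * (S - lam * c) * (1 + lam * r ^ 2) * r ^ 2 := by
    intro r
    linear_combination (om ^ 2 - 2 * lam ^ 2 * c - 2 * lam * S + 4 * lam * om ^ 2 * r ^ 2) * hS2
  have hval : Ueff rmin = -lam * c + S := by
    rw [hcomb rmin hrpos]
    have hD : (0:ℝ) < 1 + lam * rmin ^ 2 := by positivity
    rw [div_eq_iff (by positivity)]
    have h4 : rmin ^ 4 = ((lam * c + S) / om ^ 2) ^ 2 := by rw [← hs]; ring
    rw [hs, h4]
    field_simp
    linear_combination (-(om ^ 2) - 2 * lam ^ 2 * c - 2 * lam * S) * hS2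
  refine ⟨hrpos, hval, ?_, ?_⟩
  · intro r hr
    rw [hval, hcomb r hr]
    have hD : (0:ℝ) < 1 + lam * r ^ 2 := by positivity
    rw [le_div_iff₀ (by positivity)]
    nlinarith [hkey r, mul_nonneg hA.le (sq_nonneg (om ^ 2 * r ^ 2 - lam * c - S)),
      pow_pos hom 4]
  · intro r hr hEq
    rw [hval, hcomb r hr] at hEq
    have hD : (0:ℝ) < 1 + lam * r ^ 2 := by positivity
    rw [div_eq_iff (by positivity)] at hEq
    have h0 : (om ^ 2 + 2 * lam ^ 2 * c - 2 * lam * S)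
        * (om ^ 2 * r ^ 2 - lam * c - S) ^ 2 = 0 := by
      linear_combination hkey r + om ^ 4 * hEq
    have hP : om ^ 2 * r ^ 2 - lam * c - S = 0 := by
      have := (mul_eq_zero.mp h0).resolve_left hA.ne'
      exact pow_eq_zero_iff (by norm_num) |>.mp this
    have hr2 : r ^ 2 = rmin ^ 2 := by
      rw [hs, eq_div_iff hom2]; linarith
    calc r = Real.sqrt (r ^ 2) := (Real.sqrt_sq hr.le).symm
      _ = Real.sqrt (rmin ^ 2) := by rw [hr2]
      _ = rmin := Real.sqrt_sq hrpos.le
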